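/- Let c ∈ (3/2, 5/2] and set β = 2(1 − c/3) (so 0 < β < 1). Then there exists γ ∈ (0, 1), depending only on c, such that for every μ > 0, every solution (A_j)_{j≥0} of the rescaled steady-state system with parameter μ satisfying A_j → 0 as j → ∞, and every j ≥ 0, one has A_{j+1} / (A_j + A_{j+1}^{1/2} A_{j+2}^{1/2}) < (1 − γ) 2^{−β/2}. -/

import Mathlib

open Filter

/-- The rescaled steady-state system for the viscous dyadic model:
`A_{j-1}² - A_j A_{j+1} = μ 2^{βj} A_j` for `j ≥ 1`, and `-A_0 A_1 = μ A_0 - 1`. -/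
def SteadyState (β μ : ℝ) (A : ℕ → ℝ) : Prop :=
  (∀ j : ℕ, A j ^ 2 - A (j + 1) * A (j + 2) = μ * (2 : ℝ) ^ (β * ((j : ℝ) + 1)) * A (j + 1)) ∧
  -(A 0 * A 1) = μ * A 0 - 1

set_option maxHeartbeats 1600000 in
theorem stmt_7 (c β : ℝ) (hc : c ∈ Set.Ioc (3 / 2 : ℝ) (5 / 2))
    (hβ : β = 2 * (1 - c / 3)) :
    ∃ γ : ℝ, 0 < γ ∧ γ < 1 ∧
      ∀ μ : ℝ, 0 < μ →
        ∀ A : ℕ → ℝ, SteadyState β μ A → Tendsto A atTop (nhds 0) →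
          ∀ j : ℕ,
            A (j + 1) / (A j + Real.sqrt (A (j + 1)) * Real.sqrt (A (j + 2)))
              < (1 - γ) * (2 : ℝ) ^ (-(β / 2)) := by
  obtain ⟨hc1, hc2⟩ := hc
  have hβpos : 0 < β := by rw [hβ]; linarith
  have hβlt1 : β < 1 := by rw [hβ]; linarith
  set q : ℝ := (2 : ℝ) ^ (β / 2) with hqdef
  have h2b_pos : (0:ℝ) < (2:ℝ) ^ β := Real.rpow_pos_of_pos two_pos β
  have h2b_gt1 : (1:ℝ) < (2:ℝ) ^ β :=
    (Real.one_lt_rpow_iff_of_pos two_pos).mpr (Or.inl ⟨one_lt_two, hβpos⟩)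
  have h2b_lt2 : (2:ℝ) ^ β < 2 := by
    calc (2:ℝ) ^ β < (2:ℝ) ^ (1:ℝ) := Real.rpow_lt_rpow_of_exponent_lt one_lt_two hβlt1
    _ = 2 := Real.rpow_one 2
  have hq1 : (1:ℝ) < q :=
    (Real.one_lt_rpow_iff_of_pos two_pos).mpr (Or.inl ⟨one_lt_two, by linarith⟩)
  have hq0 : (0:ℝ) < q := lt_trans one_pos hq1
  have hq2 : q ^ 2 = (2:ℝ) ^ β := by
    rw [sq, hqdef, ← Real.rpow_add two_pos]; congr 1; ring
  refine ⟨1 - (2:ℝ) ^ β / (q + 1), by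
      rw [sub_pos, div_lt_one (by linarith)]; linarith, by
      have : (0:ℝ) < (2:ℝ) ^ β / (q + 1) := div_pos h2b_pos (by linarith)
      linarith, ?_⟩
  intro μ hμ A hA hlim
  obtain ⟨hE, hB⟩ := hA
  -- basic facts about the powers of two appearing in the equations
  have hPpos : ∀ k : ℕ, (0:ℝ) < (2:ℝ) ^ (β * ((k : ℝ) + 1)) :=
    fun k => Real.rpow_pos_of_pos two_pos _
  have hP1 : ∀ k : ℕ, (1:ℝ) ≤ (2:ℝ) ^ (β * ((k : ℝ) + 1)) := by
    intro k
    calc (1:ℝ) = (2:ℝ) ^ (0:ℝ) := (Real.rpow_zero 2).symm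
    _ ≤ (2:ℝ) ^ (β * ((k : ℝ) + 1)) := Real.rpow_le_rpow_of_exponent_le one_le_two (by positivity)
  have hshift : ∀ k : ℕ, (2:ℝ) ^ (β * (((k+1 : ℕ) : ℝ) + 1)) =
      (2:ℝ) ^ β * (2:ℝ) ^ (β * ((k : ℝ) + 1)) := by
    intro k
    rw [← Real.rpow_add two_pos]; congr 1; push_cast; ring
  -- no entry vanishes
  have hzero : ∀ k, A k ≠ 0 := by
    have hdown0 : ∀ k, A k = 0 → A 0 = 0 := by
      intro k
      induction k with
      | zero => exact id
      | succ n ih =>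
        intro h
        apply ih
        have he := hE n
        rw [h] at he
        have : A n ^ 2 = 0 := by linarith [he]
        exact pow_eq_zero_iff (n := 2) (by norm_num) |>.mp this
    intro k hk
    have h0 : A 0 = 0 := hdown0 k hk
    rw [h0] at hB
    nlinarith [hB]
  have hsqpos : ∀ k, 0 < A k ^ 2 := by
    intro k
    exact (sq_nonneg (A k)).lt_of_ne (Ne.symm (pow_ne_zero 2 (hzero k)))
  -- tail smallness
  obtain ⟨N, hN⟩ : ∃ N, ∀ n ≥ N, |A n| < μ := by
    have h := Metric.tendsto_atTop.mp hlim μ hμ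
    obtain ⟨N, hN⟩ := h
    exact ⟨N, fun n hn => by simpa [Real.dist_eq] using hN n hn⟩
  -- positivity of the tail
  have hptail : ∀ k, N ≤ k → 0 < A (k + 1) := by
    intro k hk
    have hfac : 0 < A (k + 2) + μ * (2:ℝ) ^ (β * ((k : ℝ) + 1)) := by
      have h1 : |A (k+2)| < μ := hN (k+2) (by omega)
      have h2 : μ * 1 ≤ μ * (2:ℝ) ^ (β * ((k : ℝ) + 1)) :=
        mul_le_mul_of_nonneg_left (hP1 k) hμ.le
      have h3 : -μ < A (k+2) := (abs_lt.mp h1).1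
      linarith
    by_contra hcon
    push_neg at hcon
    nlinarith [hE k, hsqpos k, mul_nonneg (neg_nonneg.mpr hcon) hfac.le]
  -- positivity propagates downward
  have hdownpos : ∀ k, 0 < A (k + 1) → 0 < A k := by
    intro k h
    match k with
    | 0 =>
      -- boundary: A 0 * (μ + A 1) = 1
      nlinarith [hB, hμ, h]
    | (n+1) =>
      have he := hE n
      have hfac : 0 < A (n + 2) + μ * (2:ℝ) ^ (β * ((n : ℝ) + 1)) := by
        have := mul_pos hμ (hPpos n); linarith
      by_contra hcon
      push_neg at hcon
      nlinarith [hsqpos n, mul_nonneg (neg_nonneg.mpr hcon) hfac.le]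
  have hpos : ∀ k, 0 < A k := by
    have hiter : ∀ d k, 0 < A (k + d) → 0 < A k := by
      intro d
      induction d with
      | zero => intro k h; exact h
      | succ d ih =>
        intro k h
        exact ih k (hdownpos (k + d) h)
    intro k
    exact hiter (N + 1) k (hptail (k + N) (by omega))
  -- the tail is strictly decreasing
  have hdtail : ∀ k, N ≤ k → A (k + 1) < A k := by
    intro k hk
    have hAk : A k < μ := lt_of_le_of_lt (le_abs_self _) (hN k hk)
    have hk0 := hpos k
    have hk1 := hpos (k+1)
    have hk2 := hpos (k+2)
    have hP := hP1 k
    have hPp := hPpos k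
    have he := hE k
    -- A k ^2 > μ P A(k+1) and A k ^2 < μ P A k
    have h1 : μ * (2:ℝ) ^ (β * ((k : ℝ) + 1)) * A (k+1) < A k ^ 2 := by
      nlinarith [mul_pos hk1 hk2]
    have h2 : A k ^ 2 < μ * (2:ℝ) ^ (β * ((k : ℝ) + 1)) * A k := by
      have : A k ^ 2 < μ * A k := by nlinarith
      nlinarith [mul_pos hμ hk0]
    have hmp : 0 < μ * (2:ℝ) ^ (β * ((k : ℝ) + 1)) := mul_pos hμ hPp
    nlinarith
  -- key two-step downward monotonicity lemma
  have hstep2 : ∀ k, A (k + 3) < A (k + 2) → A (k + 1) < A k := by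
    intro k hd
    by_contra hcon
    push_neg at hcon  -- A k ≤ A (k+1)
    have ha := hpos k
    have hb := hpos (k+1)
    have hc := hpos (k+2)
    obtain ⟨m, hmpos, he1, he2⟩ : ∃ m, 0 < m ∧
        (A k ^ 2 - A (k+1) * A (k+2) = m * A (k+1)) ∧
        (A (k+1) ^ 2 - A (k+2) * A (k+3) = (2:ℝ) ^ β * m * A (k+2)) := by
      refine ⟨μ * (2:ℝ) ^ (β * ((k : ℝ) + 1)), mul_pos hμ (hPpos k), hE k, ?_⟩
      have h := hE (k+1)
      rw [hshift k] at h
      linarith [h]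
    -- (*) m ≤ A (k+1) - A (k+2)
    have hsq : A k ^ 2 ≤ A (k+1) ^ 2 := by
      nlinarith [mul_nonneg (sub_nonneg.mpr hcon) (by linarith : (0:ℝ) ≤ A k + A (k+1))]
    have hmul : A (k+1) * m ≤ A (k+1) * (A (k+1) - A (k+2)) := by nlinarith [he1, hsq]
    have hgap : m ≤ A (k+1) - A (k+2) := le_of_mul_le_mul_left hmul hb
    -- from he2 and A(k+3) < A(k+2):
    have hcd : A (k+2) * A (k+3) < A (k+2) ^ 2 := by
      nlinarith [mul_pos hc (sub_pos.mpr hd)]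
    have hA2 : m * (A (k+1) + A (k+2)) ≤ A (k+1) ^ 2 - A (k+2) ^ 2 := by
      nlinarith [mul_nonneg (sub_nonneg.mpr hgap) (by linarith : (0:ℝ) ≤ A (k+1) + A (k+2))]
    have hmain : m * (A (k+1) + A (k+2)) < (2:ℝ) ^ β * m * A (k+2) := by
      linarith [he2, hcd, hA2]
    have hfin1 : 0 < (2 - (2:ℝ) ^ β) * (m * A (k+2)) :=
      mul_pos (by linarith) (mul_pos hmpos hc)
    have hfin2 : 0 ≤ m * (A (k+1) - A (k+2) - m) := mul_nonneg hmpos.le (by linarith)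
    nlinarith [hfin1, hfin2, sq_nonneg m, hmain]
  -- full strict monotonicity
  have hdec : ∀ k, A (k + 1) < A k := by
    have hd2 : ∀ d k, N ≤ k + 2 * d → A (k + 1) < A k := by
      intro d
      induction d with
      | zero => intro k h; exact hdtail k (by omega)
      | succ d ih =>
        intro k h
        exact hstep2 k (ih (k + 2) (by omega))
    intro k
    exact hd2 N k (by omega)
  -- the key cubic inequality : A(j+1)^3 < 2^β * A j ^2 * A (j+2)
  have hkey : ∀ j, A (j+1) ^ 3 < (2:ℝ) ^ β * A j ^ 2 * A (j+2) := by
    intro j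
    have ha := hpos j
    have hb := hpos (j+1)
    have hc := hpos (j+2)
    have hd := hdec (j+2)  -- A (j+3) < A (j+2)
    obtain ⟨m, hmpos, he1, he2⟩ : ∃ m, 0 < m ∧
        (A j ^ 2 - A (j+1) * A (j+2) = m * A (j+1)) ∧
        (A (j+1) ^ 2 - A (j+2) * A (j+3) = (2:ℝ) ^ β * m * A (j+2)) := by
      refine ⟨μ * (2:ℝ) ^ (β * ((j : ℝ) + 1)), mul_pos hμ (hPpos j), hE j, ?_⟩
      have h := hE (j+1)
      rw [hshift j] at h
      linarith [h]
    -- 2^β a² c - b³ = b c (2^β c - d)  via the two equations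
    have hid : (2:ℝ) ^ β * A j ^ 2 * A (j+2) - A (j+1) ^ 3 =
        A (j+1) * A (j+2) * ((2:ℝ) ^ β * A (j+2) - A (j+3)) := by
      linear_combination ((2:ℝ) ^ β * A (j+2)) * he1 - A (j+1) * he2
    nlinarith [mul_pos (mul_pos hb hc) (sub_pos.mpr hd),
      mul_nonneg (mul_nonneg hb.le hc.le) (mul_nonneg (sub_nonneg.mpr h2b_gt1.le) hc.le)]
  -- conclusion
  intro j
  have ha := hpos j
  have hb := hpos (j+1)
  have hc := hpos (j+2)
  have hba : A (j+1) < A j := hdec j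
  have hsqrt : Real.sqrt (A (j+1)) * Real.sqrt (A (j+2)) =
      Real.sqrt (A (j+1) * A (j+2)) := (Real.sqrt_mul hb.le _).symm
  have hs : A (j+1) ^ 2 / (q * A j) < Real.sqrt (A (j+1) * A (j+2)) := by
    rw [Real.lt_sqrt (by positivity)]
    rw [div_pow, div_lt_iff₀ (by positivity)]
    nlinarith [hkey j, mul_lt_mul_of_pos_left (hkey j) hb, hq2]
  have hden2 : (0:ℝ) < A j + A (j+1) ^ 2 / (q * A j) :=
    add_pos ha (div_pos (pow_pos hb 2) (mul_pos hq0 ha))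
  have hden : A j + A (j+1) ^ 2 / (q * A j) < A j + Real.sqrt (A (j+1)) * Real.sqrt (A (j+2)) := by
    rw [hsqrt]; linarith
  have hratio1 : A (j+1) / (A j + Real.sqrt (A (j+1)) * Real.sqrt (A (j+2))) <
      A (j+1) / (A j + A (j+1) ^ 2 / (q * A j)) :=
    div_lt_div_of_pos_left hb hden2 hden
  have hratio2 : A (j+1) / (A j + A (j+1) ^ 2 / (q * A j)) =
      q * A j * A (j+1) / (q * A j ^ 2 + A (j+1) ^ 2) := by
    field_simp
  have hratio3 : q * A j * A (j+1) / (q * A j ^ 2 + A (j+1) ^ 2) ≤ q / (q + 1) := by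
    rw [div_le_div_iff₀ (by positivity) (by linarith)]
    have hqa : 0 ≤ q * A j - A (j+1) := by nlinarith
    have h1 : 0 ≤ (A j - A (j+1)) * (q * A j - A (j+1)) :=
      mul_nonneg (by linarith) hqa
    nlinarith [mul_nonneg hq0.le h1]
  have hRHS : (1 - (1 - (2:ℝ) ^ β / (q + 1))) * (2:ℝ) ^ (-(β / 2)) = q / (q + 1) := by
    have hneg : (2:ℝ) ^ (-(β / 2)) = q⁻¹ := by
      rw [Real.rpow_neg (by norm_num : (0:ℝ) ≤ 2)]
    rw [hneg]
    have hq1' : q + 1 ≠ 0 := by linarith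
    field_simp
    linear_combination (-1) * hq2
  rw [hRHS]
  calc A (j+1) / (A j + Real.sqrt (A (j+1)) * Real.sqrt (A (j+2)))
      < A (j+1) / (A j + A (j+1) ^ 2 / (q * A j)) := hratio1
    _ = q * A j * A (j+1) / (q * A j ^ 2 + A (j+1) ^ 2) := hratio2
    _ ≤ q / (q + 1) := hratio3
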